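/- Let P be a finite poset and θ an equivalence relation on P such that: every θ-equivalence class is an interval [min class, max class], and both the map π↓ sending each element to the minimal element of its class and the map π↑ sending each element to the maximal element of its class are order-preserving. Then the quotient relation on P/θ, given by [p] ≤ [q] iff ∃ p' ∈ [p], q' ∈ [q] with p' ≤ q', is a partial order. -/
import Mathlib


def quotRel {P : Type*} [PartialOrder P] (θ : Setoid P) :
    Quotient θ → Quotient θ → Prop :=
  fun a b => ∃ p q : P, a = Quotient.mk θ p ∧ b = Quotient.mk θ q ∧ p ≤ q

/-- Reading's characterisation: every class is the interval `[π↓ p, π↑ p]` and the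
two projections are order-preserving; then the quotient relation is a partial order. -/
theorem reading_congruence_quotient_is_partialOrder
    {P : Type*} [PartialOrder P] [Finite P] (θ : Setoid P)
    (πdown πup : P → P)
    (hint : ∀ p q : P, θ.r p q ↔ (πdown p ≤ q ∧ q ≤ πup p))
    (hdown : Monotone πdown) (hup : Monotone πup) :
    IsPartialOrder (Quotient θ) (quotRel θ) := by
  -- basic facts
  have hself : ∀ p : P, πdown p ≤ p ∧ p ≤ πup p := fun p => (hint p p).1 (θ.refl p)
  have hmem : ∀ p : P, θ.r p (πdown p) := fun p =>
    (hint p (πdown p)).2 ⟨le_refl _, (hself p).1.trans (hself p).2⟩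
  have hmemu : ∀ p : P, θ.r p (πup p) := fun p =>
    (hint p (πup p)).2 ⟨(hself p).1.trans (hself p).2, le_refl _⟩
  have hdeq : ∀ p q : P, θ.r p q → πdown p = πdown q := by
    intro p q h
    have h1 : πdown q ≤ πdown p := ((hint q (πdown p)).1 (θ.trans (θ.symm h) (hmem p))).1
    have h2 : πdown p ≤ πdown q := ((hint p (πdown q)).1 (θ.trans h (hmem q))).1
    exact le_antisymm h2 h1
  have hueq : ∀ p q : P, θ.r p q → πup p = πup q := by
    intro p q h
    have h1 : πup p ≤ πup q := ((hint q (πup p)).1 (θ.trans (θ.symm h) (hmemu p))).2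
    have h2 : πup q ≤ πup p := ((hint p (πup q)).1 (θ.trans h (hmemu q))).2
    exact le_antisymm h1 h2
  refine { refl := ?_, trans := ?_, antisymm := ?_ }
  · -- refl
    intro a
    obtain ⟨p, rfl⟩ := Quotient.exists_rep a
    exact ⟨p, p, rfl, rfl, le_refl p⟩
  · -- trans
    rintro a b c ⟨p, q, rfl, rfl, hpq⟩ ⟨q', r, hb, rfl, hqr⟩
    have hqq' : θ.r q q' := Quotient.exact hb
    refine ⟨πdown p, r, Quotient.sound (hmem p), rfl, ?_⟩
    calc πdown p ≤ πdown q := hdown hpq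
      _ = πdown q' := hdeq q q' hqq'
      _ ≤ q' := (hself q').1
      _ ≤ r := hqr
  · -- antisymm
    rintro a b ⟨p, q, rfl, rfl, hpq⟩ ⟨q', p', hb, ha, hqp⟩
    have hqq' : θ.r q q' := Quotient.exact hb
    have hpp' : θ.r p p' := Quotient.exact ha
    refine Quotient.sound ((hint p q).2 ⟨(hdown hpq).trans (hself q).1, ?_⟩)
    calc q ≤ πup q := (hself q).2
      _ = πup q' := hueq q q' hqq'
      _ ≤ πup p' := hup hqp
      _ = πup p := (hueq p p' hpp').symm
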